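/- arXiv:1711.03539 — 4 statements merged into one kernel-verified Lean document; each statement's English description precedes it below -/
import Mathlib

section
/- Let u₀ ∈ (0, 1), c ∈ ℝ and ε > 0 satisfy 0 < c − ε < u₀. Define Λ⁻(r) = log(exp(−r)·u₀ + 1 − u₀) + r·(c − ε), the cumulant generating function of the step c − y − ε for y a Bernoulli(u₀) random variable. Then Λ⁻ has a unique nonzero root r⁻, this root satisfies r⁻ > 0, and exp(r⁻) ≥ (u₀·(c − ε)^{−1} − u₀)/(1 − u₀). -/
open Real Set

private lemma three_roots_sorted {f : ℝ → ℝ} (hf : StrictConvexOn ℝ (Set.Ici 0) f)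
    {x y z : ℝ} (hx : (0:ℝ) ≤ x) (hz : (0:ℝ) ≤ z) (hxy : x < y) (hyz : y < z)
    (fx : f x = 0) (fy : f y = 0) (fz : f z = 0) : False := by
  have hxz : x < z := hxy.trans hyz
  have hzx : (0:ℝ) < z - x := by linarith
  set θ : ℝ := (z - y) / (z - x) with hθ
  have hθ0 : 0 < θ := div_pos (by linarith) hzx
  have hθ1 : 0 < 1 - θ := by
    rw [hθ, sub_pos, div_lt_one hzx]; linarith
  have key := hf.2 hx hz (ne_of_lt hxz) hθ0 hθ1 (by ring)
  have hy : θ • x + (1 - θ) • z = y := by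
    simp only [smul_eq_mul, hθ]
    field_simp
    ring
  rw [hy, fx, fy, fz] at key
  simp at key

private lemma three_roots {f : ℝ → ℝ} (hf : StrictConvexOn ℝ (Set.Ici 0) f)
    {x y z : ℝ} (hx : (0:ℝ) ≤ x) (hy : (0:ℝ) ≤ y) (hz : (0:ℝ) ≤ z)
    (hxy : x ≠ y) (hxz : x ≠ z) (hyz : y ≠ z)
    (fx : f x = 0) (fy : f y = 0) (fz : f z = 0) : False := by
  rcases lt_trichotomy x y with h1 | h1 | h1
  · rcases lt_trichotomy y z with h2 | h2 | h2
    · exact three_roots_sorted hf hx hz h1 h2 fx fy fz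
    · exact hyz h2
    · rcases lt_trichotomy x z with h3 | h3 | h3
      · exact three_roots_sorted hf hx hy h3 h2 fx fz fy
      · exact hxz h3
      · exact three_roots_sorted hf hz hy h3 h1 fz fx fy
  · exact hxy h1
  · rcases lt_trichotomy x z with h2 | h2 | h2
    · exact three_roots_sorted hf hy hz h1 h2 fy fx fz
    · exact hxz h2
    · rcases lt_trichotomy y z with h3 | h3 | h3
      · exact three_roots_sorted hf hy hx h3 h2 fy fz fx
      · exact hyz h3
      · exact three_roots_sorted hf hz hx h3 h1 fz fy fx

/-- **Lower-side cumulant generating function root** (from the proof of Theorem 2).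
For a Bernoulli(`u₀`) variable `y` and step `c - y - ε` with `0 < c - ε < u₀ < 1`,
the cumulant generating function `Λ⁻(r) = log (exp (-r) u₀ + 1 - u₀) + r (c - ε)`
has a unique nonzero root `r⁻`; this root is positive and satisfies
`exp r⁻ ≥ (u₀ (c - ε)⁻¹ - u₀) / (1 - u₀)`. -/
theorem lower_cgf_unique_root
    (u₀ c ε : ℝ) (hu₀ : u₀ ∈ Set.Ioo (0 : ℝ) 1) (hε : 0 < ε)
    (h1 : 0 < c - ε) (h2 : c - ε < u₀)
    (Λm : ℝ → ℝ)
    (hΛ : ∀ r, Λm r = Real.log (Real.exp (-r) * u₀ + 1 - u₀) + r * (c - ε)) :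
    ∃ rm : ℝ, (rm ≠ 0 ∧ Λm rm = 0) ∧
      (∀ r', r' ≠ 0 → Λm r' = 0 → r' = rm) ∧
      0 < rm ∧ (u₀ * (c - ε)⁻¹ - u₀) / (1 - u₀) ≤ Real.exp rm := by
  obtain ⟨hu0, hu1⟩ := hu₀
  set a : ℝ := c - ε with ha_def
  clear_value a
  have hb : (0:ℝ) < 1 - u₀ := by linarith
  have ha1 : a < 1 := lt_trans h2 hu1
  -- strict convexity of φ
  set φ : ℝ → ℝ := fun t => (t * u₀ + 1 - u₀) - t ^ a with hφ_def
  have haff : ConvexOn ℝ (Set.Ici 0) (fun t : ℝ => t * u₀ + 1 - u₀) := by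
    refine ⟨convex_Ici 0, fun x _ y _ p q hp hq hpq => ?_⟩
    simp only [smul_eq_mul]
    have : (p * x + q * y) * u₀ + 1 - u₀ = p * (x * u₀ + 1 - u₀) + q * (y * u₀ + 1 - u₀) := by
      linear_combination (u₀ - 1) * hpq
    linarith [this.le]
  have hφconv : StrictConvexOn ℝ (Set.Ici 0) φ := by
    have := haff.sub_strictConcaveOn (Real.strictConcaveOn_rpow h1 ha1)
    exact this
  -- key equivalence
  have hkey : ∀ r : ℝ, Λm r = 0 ↔ φ (Real.exp (-r)) = 0 := by
    intro r
    set t : ℝ := Real.exp (-r) with ht_def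
    have ht : 0 < t := Real.exp_pos _
    have hg : 0 < t * u₀ + 1 - u₀ := by nlinarith
    have hta : 0 < t ^ a := Real.rpow_pos_of_pos ht a
    have hΛr : Λm r = Real.log (t * u₀ + 1 - u₀) - Real.log (t ^ a) := by
      rw [hΛ r, Real.log_rpow ht, ht_def, Real.log_exp]; ring
    rw [hΛr]
    constructor
    · intro h
      have hlog : Real.log (t * u₀ + 1 - u₀) = Real.log (t ^ a) := by linarith
      have := Real.log_injOn_pos (Set.mem_Ioi.2 hg) (Set.mem_Ioi.2 hta) hlog
      simp only [hφ_def]; linarith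
    · intro h
      have : t * u₀ + 1 - u₀ = t ^ a := by simp only [hφ_def] at h; linarith
      rw [this]; ring
  -- Λm 0 = 0
  have hΛ0 : Λm 0 = 0 := by
    rw [hΛ 0]; simp
  -- stationary point
  set rh : ℝ := Real.log (u₀ * (1 - a) / (a * (1 - u₀))) with hrh_def
  have ha' : (0:ℝ) < 1 - a := by linarith
  have harg : (0:ℝ) < u₀ * (1 - a) / (a * (1 - u₀)) :=
    div_pos (mul_pos hu0 ha') (mul_pos h1 hb)
  have hrh_pos : 0 < rh := by
    apply Real.log_pos
    rw [lt_div_iff₀ (mul_pos h1 hb)]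
    nlinarith
  -- Λm rh < 0 (Gibbs)
  have hL1 : Real.log ((1 - u₀) / (1 - a)) ≤ (1 - u₀) / (1 - a) - 1 :=
    Real.log_le_sub_one_of_pos (div_pos hb ha')
  have hL2 : Real.log (u₀ / a) < u₀ / a - 1 :=
    Real.log_lt_sub_one_of_pos (div_pos hu0 h1) (by
      intro h
      rw [div_eq_one_iff_eq (ne_of_gt h1)] at h
      linarith)
  have hrh_eq : rh = Real.log (u₀ / a) - Real.log ((1 - u₀) / (1 - a)) := by
    rw [hrh_def, ← Real.log_div (ne_of_gt (div_pos hu0 h1)) (ne_of_gt (div_pos hb ha'))]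
    congr 1
    field_simp
  have hexp_neg_rh : Real.exp (-rh) = a * (1 - u₀) / (u₀ * (1 - a)) := by
    rw [hrh_def, ← Real.log_inv, Real.exp_log (inv_pos.2 harg)]
    rw [inv_div]
  have hgarg : Real.exp (-rh) * u₀ + 1 - u₀ = (1 - u₀) / (1 - a) := by
    rw [hexp_neg_rh]
    field_simp
    ring
  have hΛrh_neg : Λm rh < 0 := by
    rw [hΛ rh, hgarg, hrh_eq]
    have e1 : (1 - a) * ((1 - u₀) / (1 - a) - 1) = (1 - u₀) - (1 - a) := by
      field_simp [ha'.ne']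
    have e2 : a * (u₀ / a - 1) = u₀ - a := by field_simp [h1.ne']
    have p1 : (1 - a) * Real.log ((1 - u₀) / (1 - a)) ≤ (1 - u₀) - (1 - a) := by
      rw [← e1]; exact mul_le_mul_of_nonneg_left hL1 (by linarith)
    have p2 : a * Real.log (u₀ / a) < u₀ - a := by
      rw [← e2]; exact mul_lt_mul_of_pos_left hL2 h1
    nlinarith
  -- a point where Λm is positive
  set R : ℝ := max rh ((1 - Real.log (1 - u₀)) / a) with hR_def
  have hrhR : rh ≤ R := le_max_left _ _
  have hΛR_pos : 0 < Λm R := by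
    rw [hΛ R]
    have hgR : 1 - u₀ ≤ Real.exp (-R) * u₀ + 1 - u₀ := by
      nlinarith [Real.exp_pos (-R)]
    have hlog : Real.log (1 - u₀) ≤ Real.log (Real.exp (-R) * u₀ + 1 - u₀) :=
      Real.log_le_log hb hgR
    have hRa : 1 - Real.log (1 - u₀) ≤ R * a := by
      have := le_max_right rh ((1 - Real.log (1 - u₀)) / a)
      calc 1 - Real.log (1 - u₀) = ((1 - Real.log (1 - u₀)) / a) * a := by
            field_simp
        _ ≤ R * a := mul_le_mul_of_nonneg_right this (le_of_lt h1)
    linarith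
  -- IVT
  have hcont : ContinuousOn Λm (Set.Icc rh R) := by
    have heq : Λm = fun r => Real.log (Real.exp (-r) * u₀ + 1 - u₀) + r * a := funext hΛ
    rw [heq]
    apply Continuous.continuousOn
    have hc1 : Continuous fun r : ℝ => Real.exp (-r) * u₀ + 1 - u₀ :=
      (((Real.continuous_exp.comp continuous_neg).mul continuous_const).add
        continuous_const).sub continuous_const
    exact (hc1.log (fun x => by nlinarith [Real.exp_pos (-x)])).add
      (continuous_id.mul continuous_const)
  have hIVT := intermediate_value_Icc hrhR hcont
  have h0mem : (0:ℝ) ∈ Set.Icc (Λm rh) (Λm R) := ⟨le_of_lt hΛrh_neg, le_of_lt hΛR_pos⟩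
  obtain ⟨rm, hrm_mem, hrm_root⟩ := hIVT h0mem
  have hrm_pos : 0 < rm := lt_of_lt_of_le hrh_pos hrm_mem.1
  refine ⟨rm, ⟨ne_of_gt hrm_pos, hrm_root⟩, ?_, hrm_pos, ?_⟩
  · -- uniqueness
    intro r' hr'ne hr'root
    by_contra hne
    have h1root : φ 1 = 0 := by
      have := (hkey 0).1 hΛ0
      simpa using this
    have hmroot : φ (Real.exp (-rm)) = 0 := (hkey rm).1 hrm_root
    have h'root : φ (Real.exp (-r')) = 0 := (hkey r').1 hr'root
    have hexp_inj : ∀ x y : ℝ, Real.exp (-x) = Real.exp (-y) → x = y := by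
      intro x y h
      have := Real.exp_injective h
      linarith
    refine three_roots hφconv (le_of_lt (Real.exp_pos _)) (le_of_lt (Real.exp_pos _))
      (zero_le_one) ?_ ?_ ?_ h'root hmroot h1root
    · intro h; exact hne (hexp_inj _ _ h)
    · intro h
      have : Real.exp (-r') = Real.exp (-(0:ℝ)) := by simpa using h
      exact hr'ne (hexp_inj _ _ this)
    · intro h
      have : Real.exp (-rm) = Real.exp (-(0:ℝ)) := by simpa using h
      exact (ne_of_gt hrm_pos) (hexp_inj _ _ this)
  · -- exp bound
    have hexp_rh : Real.exp rh = u₀ * (1 - a) / (a * (1 - u₀)) := Real.exp_log harg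
    have hbound_eq : (u₀ * a⁻¹ - u₀) / (1 - u₀) = u₀ * (1 - a) / (a * (1 - u₀)) := by
      field_simp
    rw [hbound_eq, ← hexp_rh]
    exact Real.exp_le_exp.2 hrm_mem.1
end

section
/- Let u₀ ∈ (0, 1), c ∈ ℝ and ε > 0 satisfy u₀ < c + ε < 1. Define Λ⁺(r) = log(exp(r)·u₀ + 1 − u₀) − r·(c + ε), the cumulant generating function of the step y − c − ε for y a Bernoulli(u₀) random variable. Then Λ⁺ has a unique nonzero root r⁺, this root satisfies r⁺ > 0, and exp(r⁺) ≥ (1 − u₀)/(u₀·(c + ε)^{−1} − u₀). -/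
/-- **Upper-side cumulant generating function root** (from the proof of Theorem 2).
For a Bernoulli(`u₀`) variable `y` and step `y - c - ε` with `0 < u₀ < c + ε < 1`,
the cumulant generating function `Λ⁺(r) = log (exp r u₀ + 1 - u₀) - r (c + ε)`
has a unique nonzero root `r⁺`; this root is positive and satisfies
`exp r⁺ ≥ (1 - u₀) / (u₀ (c + ε)⁻¹ - u₀)`. -/
theorem upper_cgf_unique_root
    (u₀ c ε : ℝ) (hu₀ : u₀ ∈ Set.Ioo (0 : ℝ) 1) (hε : 0 < ε)
    (h1 : u₀ < c + ε) (h2 : c + ε < 1)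
    (Λp : ℝ → ℝ)
    (hΛ : ∀ r, Λp r = Real.log (Real.exp r * u₀ + 1 - u₀) - r * (c + ε)) :
    ∃ rp : ℝ, (rp ≠ 0 ∧ Λp rp = 0) ∧
      (∀ r', r' ≠ 0 → Λp r' = 0 → r' = rp) ∧
      0 < rp ∧ (1 - u₀) / (u₀ * (c + ε)⁻¹ - u₀) ≤ Real.exp rp := by
  obtain ⟨hu0, hu1⟩ := hu₀
  set a : ℝ := c + ε with ha
  set u : ℝ := u₀ with hu
  have ha0 : 0 < a := lt_trans hu0 h1
  have ha1 : a < 1 := h2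
  have h1a : 0 < 1 - a := sub_pos.2 ha1
  have h1u : 0 < 1 - u := sub_pos.2 hu1
  set F : ℝ → ℝ := fun r => Real.exp r * u + 1 - u - Real.exp (r * a) with hF
  -- positivity of the inner term
  have hP : ∀ r, 0 < Real.exp r * u + 1 - u := by
    intro r
    nlinarith [Real.exp_pos r]
  -- roots of Λp are roots of F
  have hroot : ∀ r, Λp r = 0 ↔ F r = 0 := by
    intro r
    rw [hΛ r]
    constructor
    · intro h
      have hlog : Real.log (Real.exp r * u + 1 - u) = r * a := by linarith [sub_eq_zero.mp h]
      have h2' := congrArg Real.exp hlog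
      rw [Real.exp_log (hP r)] at h2'
      simp only [hF]
      linarith [h2']
    · intro h
      have heq : Real.exp r * u + 1 - u = Real.exp (r * a) := by
        simp only [hF] at h; linarith
      rw [heq, Real.log_exp]; ring
  set rh : ℝ := Real.log (a / u) / (1 - a) with hrh
  have hau : 1 < a / u := (one_lt_div hu0).2 h1
  have hrh_pos : 0 < rh := div_pos (Real.log_pos hau) h1a
  -- derivative of F
  have hder : ∀ r, HasDerivAt F (Real.exp r * u - Real.exp (r * a) * a) r := by
    intro r
    have h1' : HasDerivAt (fun r : ℝ => Real.exp r * u + 1 - u) (Real.exp r * u) r := by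
      have := ((Real.hasDerivAt_exp r).mul_const u).add_const 1
      simpa using this.sub_const u
    have h2' : HasDerivAt (fun r : ℝ => Real.exp (r * a)) (Real.exp (r * a) * a) r := by
      have hid : HasDerivAt (fun r : ℝ => r * a) a r := by
        simpa using (hasDerivAt_id r).mul_const a
      exact (Real.hasDerivAt_exp (r * a)).comp r hid
    exact h1'.sub h2'
  have hcont : Continuous F := by
    simp only [hF]
    continuity
  -- sign decomposition of the derivative
  have key : ∀ r : ℝ, Real.exp r * u - Real.exp (r * a) * a
      = Real.exp (r * a) * (u * Real.exp (r * (1 - a)) - a) := by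
    intro r
    have h : Real.exp r = Real.exp (r * a) * Real.exp (r * (1 - a)) := by
      rw [← Real.exp_add]; ring_nf
    rw [h]; ring
  have hdpos : ∀ r, rh < r → 0 < Real.exp r * u - Real.exp (r * a) * a := by
    intro r hr
    rw [key r]
    have h1' : Real.log (a / u) < r * (1 - a) := by
      rw [hrh, div_lt_iff₀ h1a] at hr
      linarith [hr]
    have h2' : a / u < Real.exp (r * (1 - a)) := by
      rw [← Real.exp_log (div_pos ha0 hu0)]
      exact Real.exp_lt_exp.2 h1'
    have h3' : a < u * Real.exp (r * (1 - a)) := by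
      rw [div_lt_iff₀ hu0] at h2'; linarith [h2']
    have := Real.exp_pos (r * a)
    nlinarith
  have hdneg : ∀ r, r < rh → Real.exp r * u - Real.exp (r * a) * a < 0 := by
    intro r hr
    rw [key r]
    have h1' : r * (1 - a) < Real.log (a / u) := by
      rw [hrh, lt_div_iff₀ h1a] at hr
      linarith [hr]
    have h2' : Real.exp (r * (1 - a)) < a / u := by
      rw [← Real.exp_log (div_pos ha0 hu0)]
      exact Real.exp_lt_exp.2 h1'
    have h3' : u * Real.exp (r * (1 - a)) < a := by
      rw [lt_div_iff₀ hu0] at h2'; linarith [h2']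
    have := Real.exp_pos (r * a)
    nlinarith
  -- monotonicity
  have hmono : StrictMonoOn F (Set.Ici rh) := by
    apply strictMonoOn_of_deriv_pos (convex_Ici rh) hcont.continuousOn
    intro x hx
    rw [interior_Ici] at hx
    rw [(hder x).deriv]
    exact hdpos x hx
  have hanti : StrictAntiOn F (Set.Iic rh) := by
    apply strictAntiOn_of_deriv_neg (convex_Iic rh) hcont.continuousOn
    intro x hx
    rw [interior_Iic] at hx
    rw [(hder x).deriv]
    exact hdneg x hx
  have hF0 : F 0 = 0 := by simp [hF]
  have hFrh : F rh < 0 := by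
    have := hanti (Set.mem_Iic.2 hrh_pos.le) (Set.mem_Iic.2 le_rfl) hrh_pos
    rw [hF0] at this
    linarith
  -- a point where F is positive
  set R : ℝ := max (rh + 1) (Real.log (2 / u) / (1 - a)) with hR
  have hRrh : rh < R := lt_of_lt_of_le (by linarith) (le_max_left _ _)
  have hFR : 0 < F R := by
    have hRge : Real.log (2 / u) / (1 - a) ≤ R := le_max_right _ _
    have h1' : Real.log (2 / u) ≤ R * (1 - a) := by
      rw [div_le_iff₀ h1a] at hRge; linarith [hRge]
    have h2' : 2 / u ≤ Real.exp (R * (1 - a)) := by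
      rw [← Real.exp_log (div_pos two_pos hu0)]
      exact Real.exp_le_exp.2 h1'
    have h3' : 2 ≤ u * Real.exp (R * (1 - a)) := by
      rw [div_le_iff₀ hu0] at h2'; linarith [h2']
    have hsplit : Real.exp R = Real.exp (R * a) * Real.exp (R * (1 - a)) := by
      rw [← Real.exp_add]; ring_nf
    have hepos := Real.exp_pos (R * a)
    simp only [hF]
    rw [hsplit]
    nlinarith
  -- existence of the root by IVT
  obtain ⟨rp, hrpIcc, hrpF⟩ : ∃ rp ∈ Set.Icc rh R, F rp = 0 := by
    have := intermediate_value_Icc hRrh.le hcont.continuousOn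
    have h0mem : (0 : ℝ) ∈ Set.Icc (F rh) (F R) := ⟨hFrh.le, hFR.le⟩
    obtain ⟨rp, hmem, heq⟩ := this h0mem
    exact ⟨rp, hmem, heq⟩
  have hrp_gt : rh < rp := by
    rcases eq_or_lt_of_le hrpIcc.1 with h | h
    · exfalso; rw [← h] at hrpF; linarith
    · exact h
  have hrp_pos : 0 < rp := lt_trans hrh_pos hrp_gt
  refine ⟨rp, ⟨ne_of_gt hrp_pos, (hroot rp).2 hrpF⟩, ?_, hrp_pos, ?_⟩
  · -- uniqueness
    intro r' hr0 hr'
    have hFr' : F r' = 0 := (hroot r').1 hr'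
    rcases le_or_gt r' rh with hle | hgt
    · exfalso
      rcases lt_or_gt_of_ne hr0 with hneg | hpos
      · have := hanti (Set.mem_Iic.2 (le_of_lt (lt_of_lt_of_le hneg hrh_pos.le)))
          (Set.mem_Iic.2 hrh_pos.le) hneg
        rw [hF0, hFr'] at this; linarith
      · have := hanti (Set.mem_Iic.2 hrh_pos.le) (Set.mem_Iic.2 hle) hpos
        rw [hF0, hFr'] at this; linarith
    · exact hmono.injOn (Set.mem_Ici.2 hgt.le) (Set.mem_Ici.2 hrp_gt.le) (by rw [hFr', hrpF])
  · -- the exponential bound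
    set M : ℝ := a * (1 - u) / (u * (1 - a)) with hM
    have hM_pos : 0 < M := by positivity
    have hden : u * a⁻¹ - u = u * (1 - a) / a := by field_simp
    have hMeq : (1 - u) / (u * a⁻¹ - u) = M := by
      have hdenpos : 0 < u * a⁻¹ - u := by rw [hden]; positivity
      rw [hM, div_eq_div_iff hdenpos.ne' (by positivity : (0:ℝ) < u * (1 - a)).ne', hden]
      field_simp
    -- KL inequality pieces
    have hlogdiv1 : Real.log (u / a) = Real.log u - Real.log a :=
      Real.log_div hu0.ne' ha0.ne'
    have hlogdiv2 : Real.log ((1 - u) / (1 - a)) = Real.log (1 - u) - Real.log (1 - a) :=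
      Real.log_div h1u.ne' h1a.ne'
    have hL1 : Real.log (u / a) ≤ u / a - 1 := Real.log_le_sub_one_of_pos (div_pos hu0 ha0)
    have hL2 : Real.log ((1 - u) / (1 - a)) ≤ (1 - u) / (1 - a) - 1 :=
      Real.log_le_sub_one_of_pos (div_pos h1u h1a)
    have e1 : a - u ≤ a * (Real.log a - Real.log u) := by
      have h := mul_le_mul_of_nonneg_left hL1 ha0.le
      rw [hlogdiv1] at h
      have hx : a * (u / a - 1) = u - a := by field_simp
      rw [hx] at h
      rw [mul_sub] at h ⊢
      linarith
    have e2 : (1 - a) * (Real.log (1 - u) - Real.log (1 - a)) ≤ a - u := by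
      have h := mul_le_mul_of_nonneg_left hL2 h1a.le
      rw [hlogdiv2] at h
      have hx : (1 - a) * ((1 - u) / (1 - a) - 1) = a - u := by field_simp; ring
      rw [hx] at h
      exact h
    have hlogM : Real.log M = Real.log a + Real.log (1 - u) - Real.log u - Real.log (1 - a) := by
      rw [hM, Real.log_div (by positivity) (by positivity),
        Real.log_mul ha0.ne' h1u.ne', Real.log_mul hu0.ne' h1a.ne']
      ring
    have hKL : Real.log (1 - u) - Real.log (1 - a) ≤ a * Real.log M := by
      rw [hlogM]; linarith [e2.trans e1]
    -- F is nonpositive at log M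
    set rM : ℝ := Real.log M with hrM
    have hFrM : F rM ≤ 0 := by
      have hexp : Real.exp rM = M := Real.exp_log hM_pos
      have hval : M * u + 1 - u = (1 - u) / (1 - a) := by
        rw [hM]; field_simp; ring
      have hge : (1 - u) / (1 - a) ≤ Real.exp (rM * a) := by
        have h0 : (1 - u) / (1 - a) = Real.exp (Real.log ((1 - u) / (1 - a))) :=
          (Real.exp_log (div_pos h1u h1a)).symm
        rw [h0]
        apply Real.exp_le_exp.2
        rw [hlogdiv2, hrM, mul_comm]
        exact hKL
      simp only [hF]
      rw [hexp]
      linarith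
    have hrM_le : rM ≤ rp := by
      by_contra hcon
      push_neg at hcon
      have hrMgt : rh < rM := lt_trans hrp_gt hcon
      have := hmono (Set.mem_Ici.2 hrp_gt.le) (Set.mem_Ici.2 hrMgt.le) hcon
      rw [hrpF] at this
      linarith
    rw [hMeq]
    calc M = Real.exp rM := (Real.exp_log hM_pos).symm
    _ ≤ Real.exp rp := Real.exp_le_exp.2 hrM_le
end

section
/- Let ε ∈ (0, 1/4], let M be a positive integer with M·ε ≥ 1, and let u₀ ∈ (2ε, 1 − 2ε). Let û₀ be the empirical mean of M i.i.d. Bernoulli(u₀) random variables, and define φ⁻(v) = (u₀·(v − ε)^{−1} − u₀)/(1 − u₀) for v > ε. Then E[φ⁻(û₀) | |û₀ − u₀| < ε] ≥ 4ε/(1 − ε)²·C(M, ⌊2εM⌋)·(2ε)^M + 1, where C(M, k) denotes the binomial coefficient. -/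
open MeasureTheory ProbabilityTheory
open scoped ENNReal

/-- The Bernoulli distribution with parameter `p`, as a measure on `ℝ`
(mass `p` at `1` and mass `1 - p` at `0`). -/
noncomputable def bernoulliReal (p : ℝ) : Measure ℝ :=
  ENNReal.ofReal p • Measure.dirac 1 + ENNReal.ofReal (1 - p) • Measure.dirac 0

lemma my_choose_le_of_double (n j k : ℕ) (hjk : j ≤ k) (hk : k + k ≤ n) :
    n.choose j ≤ n.choose k := by
  induction hjk using Nat.decreasingInduction with
  | self => exact le_rfl
  | of_succ i hi ih => exact (Nat.choose_le_succ_of_lt_half_left (by omega)).trans ih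

lemma my_choose_mono_mid (n j k : ℕ) (hjk : j ≤ k) (hk : j + k ≤ n) :
    n.choose j ≤ n.choose k := by
  rcases le_or_gt (k + k) n with h | h
  · exact my_choose_le_of_double n j k hjk h
  · rw [← Nat.choose_symm (by omega : k ≤ n)]
    exact my_choose_le_of_double n j (n - k) (by omega) (by omega)

lemma bernoulliReal_one (p : ℝ) : bernoulliReal p {1} = ENNReal.ofReal p := by
  simp [bernoulliReal]

lemma bernoulliReal_zero (p : ℝ) : bernoulliReal p {0} = ENNReal.ofReal (1 - p) := by
  simp [bernoulliReal]

set_option maxHeartbeats 1000000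

/-- **Bound from the proof of Theorem 2 yielding `C₁⁻`**: with `û₀` the empirical
mean of `M` i.i.d. Bernoulli(`u₀`) variables, `A = {|û₀ - u₀| < ε}` and
`φ⁻(v) = (u₀ (v - ε)⁻¹ - u₀) / (1 - u₀)` (so that `φ⁻(û₀) = exp (r̂⁻(û₀))`),
`E[φ⁻(û₀) | A] ≥ 4ε / (1 - ε)² · C(M, ⌊2εM⌋) · (2ε)^M + 1`. -/
theorem conditional_phi_minus_lower_bound
    {Ω : Type*} [MeasurableSpace Ω] {μ : Measure Ω} [IsProbabilityMeasure μ]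
    (ε : ℝ) (hε : 0 < ε) (hε4 : ε ≤ 1 / 4)
    (M : ℕ) (hM : 0 < M) (hMε : 1 ≤ (M : ℝ) * ε)
    (u₀ : ℝ) (hu₀ : u₀ ∈ Set.Ioo (2 * ε) (1 - 2 * ε))
    (y : Fin M → Ω → ℝ) (hmeas : ∀ k, Measurable (y k))
    (hindep : iIndepFun y μ)
    (hdist : ∀ k, Measure.map (y k) μ = bernoulliReal u₀)
    (uhat : Ω → ℝ) (huhat : ∀ ω, uhat ω = (∑ k, y k ω) / M)
    (A : Set Ω) (hA : A = {ω | |uhat ω - u₀| < ε})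
    (φm : ℝ → ℝ) (hφm : ∀ v, v > ε → φm v = (u₀ * (v - ε)⁻¹ - u₀) / (1 - u₀)) :
    4 * ε / (1 - ε) ^ 2 * (M.choose ⌊2 * ε * M⌋₊ : ℝ) * (2 * ε) ^ M + 1 ≤
      ∫ ω, φm (uhat ω) ∂(μ[|A]) := by
  classical
  obtain ⟨hu1, hu2⟩ := hu₀
  have hε1 : ε < 1 := by linarith
  have hMpos : (0 : ℝ) < M := by exact_mod_cast hM
  have hu0pos : (0 : ℝ) < u₀ := by linarith
  have h1u : (0 : ℝ) < 1 - u₀ := by linarith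
  have hu2e : (0 : ℝ) < u₀ - 2 * ε := by linarith
  -- measurability
  have huhat' : uhat = fun ω => (∑ k, y k ω) / M := funext huhat
  have hmuhat : Measurable uhat := by
    rw [huhat']
    exact (Finset.measurable_sum Finset.univ fun k _ => hmeas k).div_const _
  have hAmeas : MeasurableSet A := by
    rw [hA]
    exact measurableSet_lt ((hmuhat.sub measurable_const).abs) measurable_const
  -- the atom k₀ / M
  set k₀ := ⌊u₀ * M⌋₊ with hk₀def
  set v₀ := (k₀ : ℝ) / M with hv₀def
  have hk₀le : (k₀ : ℝ) ≤ u₀ * M := Nat.floor_le (by positivity)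
  have hk₀gt : u₀ * M < k₀ + 1 := Nat.lt_floor_add_one _
  have hv₀le : v₀ ≤ u₀ := by rw [hv₀def, div_le_iff₀ hMpos]; linarith
  have hv₀gt : u₀ - ε < v₀ := by
    rw [hv₀def, lt_div_iff₀ hMpos]
    nlinarith
  have hεv₀ : ε < v₀ := by linarith
  have hv₀ε : (0 : ℝ) < v₀ - ε := by linarith
  have hk₀M : k₀ ≤ M := by
    have h : (k₀ : ℝ) ≤ (M : ℝ) := by nlinarith
    exact_mod_cast h
  set B : Set Ω := {ω | uhat ω = v₀} with hBdef
  have hBmeas : MeasurableSet B := hmuhat (measurableSet_singleton v₀)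
  have hBA : B ⊆ A := by
    intro ω hω
    rw [hA]
    have hω' : uhat ω = v₀ := hω
    simp only [Set.mem_setOf_eq]
    rw [hω', abs_lt]
    constructor <;> linarith
  -- law of each coordinate
  have hpre : ∀ (k : Fin M) (c : ℝ), μ (y k ⁻¹' {c}) = bernoulliReal u₀ {c} := fun k c => by
    rw [← Measure.map_apply (hmeas k) (measurableSet_singleton _), hdist k]
  -- lower bound on the probability of the atom
  have hatom : ENNReal.ofReal ((M.choose k₀ : ℝ) * (u₀ ^ k₀ * (1 - u₀) ^ (M - k₀))) ≤ μ B := by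
    set E : Finset (Fin M) → Set Ω :=
      fun S => ⋂ k, y k ⁻¹' {if k ∈ S then (1 : ℝ) else 0} with hEdef
    have hEmeas : ∀ S, MeasurableSet (E S) := fun S =>
      MeasurableSet.iInter fun k => (hmeas k) (measurableSet_singleton _)
    have hEμ : ∀ S : Finset (Fin M), μ (E S) =
        ENNReal.ofReal u₀ ^ S.card * ENNReal.ofReal (1 - u₀) ^ (M - S.card) := by
      intro S
      have h := hindep.measure_inter_preimage_eq_mul (S := Finset.univ)
        (sets := fun k => {if k ∈ S then (1 : ℝ) else 0}) (fun i _ => measurableSet_singleton _)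
      have hE' : E S = ⋂ k ∈ Finset.univ, y k ⁻¹' {if k ∈ S then (1 : ℝ) else 0} := by
        simp [hEdef]
      rw [hE', h]
      have hterm : ∀ k : Fin M, μ (y k ⁻¹' {if k ∈ S then (1 : ℝ) else 0}) =
          if k ∈ S then ENNReal.ofReal u₀ else ENNReal.ofReal (1 - u₀) := by
        intro k
        by_cases hk : k ∈ S <;>
          simp [hk, hpre, bernoulliReal_one, bernoulliReal_zero]
      rw [Finset.prod_congr rfl fun k _ => hterm k, Finset.prod_ite, Finset.prod_const,
        Finset.prod_const]
      have hc1 : (Finset.univ.filter fun k => k ∈ S).card = S.card := by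
        rw [Finset.filter_mem_eq_inter, Finset.univ_inter]
      have hc2 : (Finset.univ.filter fun k => ¬ k ∈ S).card = M - S.card := by
        have h3 := Finset.card_filter_add_card_filter_not
          (s := (Finset.univ : Finset (Fin M))) (p := fun k => k ∈ S)
        have h4 : (Finset.univ : Finset (Fin M)).card = M := by simp
        omega
      rw [hc1, hc2]
    set 𝒮 := Finset.powersetCard k₀ (Finset.univ : Finset (Fin M)) with h𝒮
    have hEB : ∀ S ∈ 𝒮, E S ⊆ B := by
      intro S hS ω hω
      rw [Finset.mem_powersetCard] at hS
      simp only [hEdef, Set.mem_iInter, Set.mem_preimage, Set.mem_singleton_iff] at hω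
      show uhat ω = v₀
      rw [huhat ω]
      have hsumω : (∑ k, y k ω) = (S.card : ℝ) := by
        rw [Finset.sum_congr rfl fun k _ => hω k, Finset.sum_ite_mem, Finset.univ_inter,
          Finset.sum_const, nsmul_eq_mul, mul_one]
      rw [hsumω, hS.2, hv₀def]
    have hdisjE : (↑𝒮 : Set (Finset (Fin M))).PairwiseDisjoint E := by
      intro S _ T _ hST
      rw [Function.onFun, Set.disjoint_left]
      intro ω hωS hωT
      apply hST
      simp only [hEdef, Set.mem_iInter, Set.mem_preimage, Set.mem_singleton_iff] at hωS hωT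
      ext k
      constructor
      · intro hkS
        by_contra hkT
        have h1 := hωS k
        have h2 := hωT k
        rw [if_pos hkS] at h1
        rw [if_neg hkT] at h2
        exact one_ne_zero (h1.symm.trans h2)
      · intro hkT
        by_contra hkS
        have h1 := hωS k
        have h2 := hωT k
        rw [if_neg hkS] at h1
        rw [if_pos hkT] at h2
        exact one_ne_zero (h2.symm.trans h1)
    have hsum : ∑ S ∈ 𝒮, μ (E S) = μ (⋃ S ∈ 𝒮, E S) :=
      (measure_biUnion_finset hdisjE fun S _ => hEmeas S).symm
    have hle : μ (⋃ S ∈ 𝒮, E S) ≤ μ B := measure_mono (Set.iUnion₂_subset hEB)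
    have hcardE : ∀ S ∈ 𝒮, μ (E S) =
        ENNReal.ofReal u₀ ^ k₀ * ENNReal.ofReal (1 - u₀) ^ (M - k₀) := by
      intro S hS
      rw [hEμ S, (Finset.mem_powersetCard.mp hS).2]
    calc ENNReal.ofReal ((M.choose k₀ : ℝ) * (u₀ ^ k₀ * (1 - u₀) ^ (M - k₀)))
        = (M.choose k₀ : ℝ≥0∞) *
            (ENNReal.ofReal u₀ ^ k₀ * ENNReal.ofReal (1 - u₀) ^ (M - k₀)) := by
          rw [ENNReal.ofReal_mul (by positivity), ENNReal.ofReal_mul (by positivity),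
            ENNReal.ofReal_pow hu0pos.le, ENNReal.ofReal_pow h1u.le, ENNReal.ofReal_natCast]
      _ = ∑ S ∈ 𝒮, μ (E S) := by
          rw [Finset.sum_congr rfl hcardE, Finset.sum_const, h𝒮, Finset.card_powersetCard,
            Finset.card_univ, Fintype.card_fin, nsmul_eq_mul]
      _ = μ (⋃ S ∈ 𝒮, E S) := hsum
      _ ≤ μ B := hle
  -- real-valued probabilities
  set q := (μ B).toReal with hq
  set p := (μ A).toReal with hp
  have hqlb : (M.choose k₀ : ℝ) * (u₀ ^ k₀ * (1 - u₀) ^ (M - k₀)) ≤ q := by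
    have h := ENNReal.toReal_mono (measure_ne_top μ B) hatom
    rwa [ENNReal.toReal_ofReal (by positivity)] at h
  have hjk₀ : ⌊2 * ε * M⌋₊ ≤ k₀ := Nat.floor_le_floor (by nlinarith)
  have hjsum : ⌊2 * ε * M⌋₊ + k₀ ≤ M := by
    have h1 : (⌊2 * ε * M⌋₊ : ℝ) ≤ 2 * ε * M := Nat.floor_le (by positivity)
    have h2 : ((⌊2 * ε * M⌋₊ + k₀ : ℕ) : ℝ) < (M : ℝ) := by push_cast; nlinarith
    exact_mod_cast h2.le
  have hq2 : (M.choose ⌊2 * ε * M⌋₊ : ℝ) * (2 * ε) ^ M ≤ q := by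
    refine le_trans ?_ hqlb
    have hchoose : M.choose ⌊2 * ε * M⌋₊ ≤ M.choose k₀ :=
      my_choose_mono_mid M _ _ hjk₀ hjsum
    have hpow : (2 * ε) ^ M ≤ u₀ ^ k₀ * (1 - u₀) ^ (M - k₀) := by
      have h2 : (2 * ε) ^ M = (2 * ε) ^ k₀ * (2 * ε) ^ (M - k₀) := by
        rw [← pow_add, Nat.add_sub_cancel' hk₀M]
      rw [h2]
      have e1 : (2 * ε) ^ k₀ ≤ u₀ ^ k₀ := pow_le_pow_left₀ (by positivity) hu1.le _
      have e2 : (2 * ε) ^ (M - k₀) ≤ (1 - u₀) ^ (M - k₀) :=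
        pow_le_pow_left₀ (by positivity) (by linarith) _
      exact mul_le_mul e1 e2 (by positivity) (by positivity)
    calc (M.choose ⌊2 * ε * M⌋₊ : ℝ) * (2 * ε) ^ M
        ≤ (M.choose k₀ : ℝ) * (2 * ε) ^ M := by
          apply mul_le_mul_of_nonneg_right _ (by positivity)
          exact_mod_cast hchoose
      _ ≤ (M.choose k₀ : ℝ) * (u₀ ^ k₀ * (1 - u₀) ^ (M - k₀)) :=
          mul_le_mul_of_nonneg_left hpow (by positivity)
  have hqpos : 0 < q := by
    have hjM : ⌊2 * ε * M⌋₊ ≤ M := le_trans hjk₀ hk₀M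
    have hcp : 0 < (M.choose ⌊2 * ε * M⌋₊ : ℝ) := by exact_mod_cast Nat.choose_pos hjM
    exact lt_of_lt_of_le (mul_pos hcp (pow_pos (by positivity) M)) hq2
  have hpq : q ≤ p := ENNReal.toReal_mono (measure_ne_top μ A) (measure_mono hBA)
  have hppos : 0 < p := lt_of_lt_of_le hqpos hpq
  have hp1 : p ≤ 1 := by
    have h := ENNReal.toReal_mono (by simp : (1 : ℝ≥0∞) ≠ ⊤) (prob_le_one (μ := μ) (s := A))
    simpa using h
  -- the function ψ
  set ψ : ℝ → ℝ := fun v => (u₀ * (v - ε)⁻¹ - u₀) / (1 - u₀) with hψdef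
  have hψmeas : Measurable ψ :=
    (((measurable_id.sub measurable_const).inv.const_mul u₀).sub measurable_const).div_const _
  have hψ1 : ∀ v, ε < v → v < u₀ + ε → 1 ≤ ψ v := by
    intro v h1 h2
    have hv : (0 : ℝ) < v - ε := by linarith
    rw [hψdef]
    simp only []
    rw [le_div_iff₀ h1u]
    have hw : (v - ε) * (v - ε)⁻¹ = 1 := mul_inv_cancel₀ hv.ne'
    have h3 := mul_le_mul_of_nonneg_right (show v - ε ≤ u₀ by linarith) (inv_pos.mpr hv).le
    rw [hw] at h3
    linarith
  have hψub : ∀ v, u₀ - ε < v → ψ v ≤ u₀ * (u₀ - 2 * ε)⁻¹ / (1 - u₀) := by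
    intro v h1
    have hv : (0 : ℝ) < v - ε := by linarith
    rw [hψdef]
    simp only []
    rw [div_le_div_iff₀ h1u h1u]
    have h2 : (v - ε)⁻¹ ≤ (u₀ - 2 * ε)⁻¹ := inv_anti₀ hu2e (by linarith)
    nlinarith [mul_le_mul_of_nonneg_left h2 hu0pos.le]
  -- integrability
  have hIntψ : IntegrableOn (fun ω => ψ (uhat ω)) A μ := by
    apply Integrable.mono' (integrable_const (u₀ * (u₀ - 2 * ε)⁻¹ / (1 - u₀)))
      (hψmeas.comp hmuhat).aestronglyMeasurable
    refine (ae_restrict_iff' hAmeas).2 (ae_of_all _ fun ω hω => ?_)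
    rw [hA] at hω
    simp only [Set.mem_setOf_eq, abs_lt] at hω
    have h1 : ε < uhat ω := by linarith [hω.1]
    have h2 : uhat ω < u₀ + ε := by linarith [hω.2]
    simp only [Function.comp_apply, Real.norm_eq_abs]
    rw [abs_of_nonneg (le_trans zero_le_one (hψ1 _ h1 h2))]
    exact hψub _ (by linarith [hω.1])
  have hgInt : IntegrableOn (fun ω => Set.indicator B (fun _ => ψ v₀ - 1) ω + 1) A μ :=
    ((integrable_const _).indicator hBmeas).add (integrable_const 1)
  have hψv₀1 : 1 ≤ ψ v₀ := hψ1 v₀ hεv₀ (by linarith)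
  have hmono : ∀ ω ∈ A, Set.indicator B (fun _ => ψ v₀ - 1) ω + 1 ≤ ψ (uhat ω) := by
    intro ω hω
    rw [hA] at hω
    simp only [Set.mem_setOf_eq, abs_lt] at hω
    by_cases hB : ω ∈ B
    · rw [Set.indicator_of_mem hB]
      have hωv : uhat ω = v₀ := hB
      rw [hωv]
      linarith
    · rw [Set.indicator_of_notMem hB]
      have h := hψ1 (uhat ω) (by linarith [hω.1]) (by linarith [hω.2])
      linarith
  -- value of the minorant's integral
  have hgval : ∫ ω in A, (Set.indicator B (fun _ => ψ v₀ - 1) ω + 1) ∂μ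
      = (ψ v₀ - 1) * q + p := by
    rw [integral_add ((integrable_const _).indicator hBmeas) (integrable_const 1)]
    rw [setIntegral_indicator hBmeas, Set.inter_eq_self_of_subset_right hBA,
      setIntegral_const, setIntegral_const]
    simp only [smul_eq_mul, mul_one]
    change _ = (ψ v₀ - 1) * μ.real B + μ.real A
    ring
  have hIA : (ψ v₀ - 1) * q + p ≤ ∫ ω in A, ψ (uhat ω) ∂μ := by
    rw [← hgval]
    exact setIntegral_mono_on hgInt hIntψ hAmeas hmono
  have hcongr : ∫ ω in A, φm (uhat ω) ∂μ = ∫ ω in A, ψ (uhat ω) ∂μ := by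
    apply setIntegral_congr_fun hAmeas
    intro ω hω
    rw [hA] at hω
    simp only [Set.mem_setOf_eq, abs_lt] at hω
    simp only [hψdef]
    exact hφm (uhat ω) (by linarith [hω.1])
  -- lower bound on ψ v₀ - 1
  have hne1 : (1 : ℝ) - u₀ ≠ 0 := h1u.ne'
  have hne2 : v₀ - ε ≠ 0 := hv₀ε.ne'
  have hid : ψ v₀ - 1 = (u₀ + ε - v₀) / ((v₀ - ε) * (1 - u₀)) := by
    rw [hψdef]
    field_simp
    ring
  have hkey : 4 * (u₀ - ε) * (1 - u₀) ≤ (1 - ε) ^ 2 := by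
    nlinarith [sq_nonneg (u₀ - ε - (1 - u₀))]
  have hd : 4 * ε / (1 - ε) ^ 2 ≤ ψ v₀ - 1 := by
    rw [hid, div_le_div_iff₀ (pow_pos (by linarith : (0:ℝ) < 1 - ε) 2) (mul_pos hv₀ε h1u)]
    have s1 : 4 * ε * ((v₀ - ε) * (1 - u₀)) ≤ 4 * ε * ((u₀ - ε) * (1 - u₀)) := by
      nlinarith [mul_nonneg (mul_nonneg hε.le h1u.le) (sub_nonneg.2 hv₀le)]
    have s2 : 4 * ε * ((u₀ - ε) * (1 - u₀)) ≤ ε * (1 - ε) ^ 2 := by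
      nlinarith [mul_nonneg hε.le (sub_nonneg.2 hkey)]
    have s3 : ε * (1 - ε) ^ 2 ≤ (u₀ + ε - v₀) * (1 - ε) ^ 2 := by
      nlinarith [mul_nonneg (sub_nonneg.2 hv₀le) (sq_nonneg (1 - ε))]
    linarith
  -- putting everything together
  unfold ProbabilityTheory.cond
  rw [integral_smul_measure, hcongr, ENNReal.toReal_inv, ← hp, smul_eq_mul]
  have hstep : p⁻¹ * ((ψ v₀ - 1) * q + p) ≤ p⁻¹ * ∫ ω in A, ψ (uhat ω) ∂μ :=
    mul_le_mul_of_nonneg_left hIA (by positivity)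
  refine le_trans ?_ hstep
  have h1 : p⁻¹ * ((ψ v₀ - 1) * q + p) = (ψ v₀ - 1) * q / p + 1 := by
    field_simp
  rw [h1]
  have hdq : 4 * ε / (1 - ε) ^ 2 * (M.choose ⌊2 * ε * M⌋₊ : ℝ) * (2 * ε) ^ M
      ≤ (ψ v₀ - 1) * q := by
    have hpos : (0 : ℝ) < 4 * ε / (1 - ε) ^ 2 := div_pos (by linarith) (pow_pos (by linarith) 2)
    have h2 : 4 * ε / (1 - ε) ^ 2 * ((M.choose ⌊2 * ε * M⌋₊ : ℝ) * (2 * ε) ^ M)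
        ≤ (ψ v₀ - 1) * q := by
      apply mul_le_mul hd hq2 (by positivity) (by linarith)
    linarith [h2, mul_assoc (4 * ε / (1 - ε) ^ 2) ((M.choose ⌊2 * ε * M⌋₊ : ℝ)) ((2 * ε) ^ M)]
  have hfrac : (ψ v₀ - 1) * q ≤ (ψ v₀ - 1) * q / p := by
    rw [le_div_iff₀ hppos]
    nlinarith [mul_nonneg (sub_nonneg.mpr hψv₀1) hqpos.le]
  linarith
end

section
/- Let M be a positive integer and let ε, u be real numbers with 0 < 2ε ≤ u ≤ 1 − 2ε and ε ≤ 1/4. Then C(M, ⌊uM⌋)·u^{⌊uM⌋}·(1 − u)^{M − ⌊uM⌋} ≥ C(M, ⌊2εM⌋)·(2ε)^M, where C(M, k) denotes the binomial coefficient. -/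
lemma choose_mono_half (M : ℕ) : ∀ k, ∀ j ≤ k, 2 * k ≤ M → M.choose j ≤ M.choose k := by
  intro k
  induction k with
  | zero => intro j hj _; interval_cases j; rfl
  | succ k ih =>
    intro j hj hk
    rcases Nat.lt_succ_iff_lt_or_eq.mp (Nat.lt_succ_of_le hj) with h | h
    · have h1 : M.choose j ≤ M.choose k :=
        ih j (Nat.lt_succ_iff.mp (by omega)) (by omega)
      have h2 : M.choose k ≤ M.choose (k + 1) := by
        apply Nat.choose_le_succ_of_lt_half_left
        have : k + 1 ≤ M / 2 := (Nat.le_div_iff_mul_le (by norm_num)).mpr (by omega)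
        omega
      omega
    · rw [h]

/-- **Binomial probability mass near the mode** (used in the proof of Theorem 2).
For a positive integer `M` and `0 < 2ε ≤ u ≤ 1 - 2ε` with `ε ≤ 1/4`, the probability
that a Binomial(`M`, `u`) variable equals `⌊uM⌋` is at least
`C(M, ⌊2εM⌋) (2ε)^M`. -/
theorem binomial_mode_lower_bound
    (M : ℕ) (hM : 0 < M) (ε u : ℝ)
    (hε : 0 < ε) (hε4 : ε ≤ 1 / 4)
    (h1 : 2 * ε ≤ u) (h2 : u ≤ 1 - 2 * ε) :
    (M.choose ⌊2 * ε * (M : ℝ)⌋₊ : ℝ) * (2 * ε) ^ M ≤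
      (M.choose ⌊u * (M : ℝ)⌋₊ : ℝ) * u ^ ⌊u * (M : ℝ)⌋₊ *
        (1 - u) ^ (M - ⌊u * (M : ℝ)⌋₊) := by
  set j := ⌊2 * ε * (M : ℝ)⌋₊ with hjdef
  set k := ⌊u * (M : ℝ)⌋₊ with hkdef
  have hMpos : (0:ℝ) < M := by exact_mod_cast hM
  have hu0 : 0 < u := lt_of_lt_of_le (by linarith) h1
  have hu1 : u ≤ 1 := by linarith
  -- k ≤ M
  have hkM : k ≤ M := by
    have : u * M ≤ M := by nlinarith
    calc k ≤ ⌊(M:ℝ)⌋₊ := Nat.floor_le_floor (by nlinarith)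
      _ = M := Nat.floor_natCast M
  -- j ≤ k
  have hjk : j ≤ k := Nat.floor_le_floor (by nlinarith)
  -- j + k ≤ M
  have hjkM : j + k ≤ M := by
    have hj' : (j:ℝ) ≤ 2 * ε * M := Nat.floor_le (by positivity)
    have hk' : (k:ℝ) ≤ u * M := Nat.floor_le (by positivity)
    have : ((j + k : ℕ) : ℝ) ≤ (M:ℝ) := by push_cast; nlinarith
    exact_mod_cast this
  -- choose inequality
  have hchoose : M.choose j ≤ M.choose k := by
    rcases le_or_gt (2 * k) M with h | h
    · exact choose_mono_half M k j hjk h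
    · have hsym : M.choose (M - k) = M.choose k := Nat.choose_symm hkM
      rw [← hsym]
      exact choose_mono_half M (M - k) j (by omega) (by omega)
  -- power inequality
  have hpow : (2 * ε) ^ M ≤ u ^ k * (1 - u) ^ (M - k) := by
    have hsplit : (2 * ε) ^ M = (2 * ε) ^ k * (2 * ε) ^ (M - k) := by
      rw [← pow_add]; congr 1; omega
    rw [hsplit]
    have hε0 : (0:ℝ) ≤ 2 * ε := by linarith
    exact mul_le_mul (pow_le_pow_left₀ hε0 h1 k) (pow_le_pow_left₀ hε0 (by linarith) (M - k))
      (by positivity) (by positivity)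
  calc (M.choose j : ℝ) * (2 * ε) ^ M
      ≤ (M.choose k : ℝ) * (u ^ k * (1 - u) ^ (M - k)) := by
        apply mul_le_mul (by exact_mod_cast hchoose) hpow (by positivity) (by positivity)
    _ = (M.choose k : ℝ) * u ^ k * (1 - u) ^ (M - k) := by ring
end
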